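/- Let H be a Hopf algebra and (K, r) a braided central Hopf subalgebra. Let V be simultaneously a left K-module (action ⊣) and left H-comodule such that the action K ⊗ V → V is a morphism of H-comodules (K with coaction by Δ into H ⊗ K). Define v ↼ x := r(v₋₁, x₁) (x₂ ⊣ v₀). Then ↼ is a right K-module structure on V. -/

import Mathlib

open TensorProduct

section AuxRightAction
variable {𝕜 H K V : Type*} [Field 𝕜] [Ring H] [HopfAlgebra 𝕜 H]
  [Ring K] [HopfAlgebra 𝕜 K] [AddCommGroup V] [Module 𝕜 V]

lemma aux_counit_left {A : Type*} [Ring A] [HopfAlgebra 𝕜 A] (x : A)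
    (S : Finset (A × A)) (hS : Coalgebra.comul (R := 𝕜) x = ∑ p ∈ S, p.1 ⊗ₜ[𝕜] p.2) :
    ∑ p ∈ S, Coalgebra.counit (R := 𝕜) p.1 • p.2 = x := by
  have := Coalgebra.rTensor_counit_comul (R := 𝕜) x
  rw [hS, map_sum] at this
  have := congrArg (TensorProduct.lid 𝕜 A) this
  simpa [LinearMap.rTensor_tmul] using this

lemma aux_counit_right {A : Type*} [Ring A] [HopfAlgebra 𝕜 A] (x : A)
    (S : Finset (A × A)) (hS : Coalgebra.comul (R := 𝕜) x = ∑ p ∈ S, p.1 ⊗ₜ[𝕜] p.2) :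
    ∑ p ∈ S, Coalgebra.counit (R := 𝕜) p.2 • p.1 = x := by
  have := Coalgebra.lTensor_counit_comul (R := 𝕜) x
  rw [hS, map_sum] at this
  have := congrArg (TensorProduct.rid 𝕜 A) this
  simpa [LinearMap.lTensor_tmul] using this

set_option maxHeartbeats 1000000 in
set_option synthInstance.maxHeartbeats 400000 in
lemma aux_comm (ι : K →ₐc[𝕜] H) (hι : Function.Injective ι)
    (r : H →ₗ[𝕜] K →ₗ[𝕜] 𝕜)
    (h24 : ∀ (h : H) (x : K),
      (TensorProduct.lid 𝕜 H) (TensorProduct.map (TensorProduct.lift r)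
          ((LinearMap.mul' 𝕜 H) ∘ₗ (TensorProduct.map ι.toLinearMap LinearMap.id)
            ∘ₗ (TensorProduct.comm 𝕜 H K).toLinearMap)
          ((TensorProduct.tensorTensorTensorComm 𝕜 H H K K)
            (Coalgebra.comul (R := 𝕜) h ⊗ₜ[𝕜] Coalgebra.comul (R := 𝕜) x)))
        = (TensorProduct.rid 𝕜 H) (TensorProduct.map
            ((LinearMap.mul' 𝕜 H) ∘ₗ (TensorProduct.map LinearMap.id ι.toLinearMap))
            (TensorProduct.lift r)
            ((TensorProduct.tensorTensorTensorComm 𝕜 H H K K)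
              (Coalgebra.comul (R := 𝕜) h ⊗ₜ[𝕜] Coalgebra.comul (R := 𝕜) x))))
    (h25 : ∀ x y : K, r (ι x) y = Coalgebra.counit (R := 𝕜) x * Coalgebra.counit (R := 𝕜) y)
    (x y : K) : x * y = y * x := by
  have hc : Coalgebra.comul (R := 𝕜) ((ι : K →ₗ[𝕜] H) x)
      = TensorProduct.map (ι : K →ₗ[𝕜] H) (ι : K →ₗ[𝕜] H) (Coalgebra.comul (R := 𝕜) x) :=
    (CoalgHomClass.map_comp_comul_apply ι x).symm
  obtain ⟨Sx, hSx⟩ := TensorProduct.exists_finset (Coalgebra.comul (R := 𝕜) x)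
  obtain ⟨Sy, hSy⟩ := TensorProduct.exists_finset (Coalgebra.comul (R := 𝕜) y)
  have H24 := h24 (ι x) y
  rw [show Coalgebra.comul (R := 𝕜) (ι x) = Coalgebra.comul (R := 𝕜) ((ι : K →ₗ[𝕜] H) x) from rfl,
    hc, hSx, hSy] at H24
  simp only [sum_tmul, tmul_sum, map_sum, map_tmul, LinearEquiv.coe_coe,
    tensorTensorTensorComm_tmul, LinearMap.comp_apply, comm_tmul, lift.tmul,
    LinearMap.mul'_apply, LinearMap.id_apply, lid_tmul, rid_tmul, h25,
    LinearMap.sum_apply, Finset.sum_apply] at H24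
  have H24' : ∑ q ∈ Sy, ∑ p ∈ Sx, r (ι p.1) q.1 • (ι q.2 * ι p.2)
      = ∑ q ∈ Sy, ∑ p ∈ Sx, r (ι p.2) q.2 • (ι p.1 * ι q.1) := H24
  simp only [h25] at H24'
  have collapse : ∀ (z : K) (S : Finset (K × K)),
      Coalgebra.comul (R := 𝕜) z = ∑ p ∈ S, p.1 ⊗ₜ[𝕜] p.2 →
      ((∑ p ∈ S, Coalgebra.counit (R := 𝕜) p.1 • ι p.2 = ι z)
      ∧ (∑ p ∈ S, Coalgebra.counit (R := 𝕜) p.2 • ι p.1 = ι z)) := by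
    intro z S hS
    constructor
    · have : ∀ p : K × K, Coalgebra.counit (R := 𝕜) p.1 • ι p.2
          = ι (Coalgebra.counit (R := 𝕜) p.1 • p.2) := fun p => (map_smul ι _ _).symm
      simp_rw [this, ← map_sum, aux_counit_left (𝕜 := 𝕜) z S hS]
    · have : ∀ p : K × K, Coalgebra.counit (R := 𝕜) p.2 • ι p.1
          = ι (Coalgebra.counit (R := 𝕜) p.2 • p.1) := fun p => (map_smul ι _ _).symm
      simp_rw [this, ← map_sum, aux_counit_right (𝕜 := 𝕜) z S hS]
  have hLHS : ∑ q ∈ Sy, ∑ p ∈ Sx,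
      (Coalgebra.counit (R := 𝕜) p.1 * Coalgebra.counit (R := 𝕜) q.1) • (ι q.2 * ι p.2)
      = ι y * ι x := by
    calc ∑ q ∈ Sy, ∑ p ∈ Sx,
        (Coalgebra.counit (R := 𝕜) p.1 * Coalgebra.counit (R := 𝕜) q.1) • (ι q.2 * ι p.2)
        = ∑ q ∈ Sy, ∑ p ∈ Sx,
          (Coalgebra.counit (R := 𝕜) q.1 • ι q.2) * (Coalgebra.counit (R := 𝕜) p.1 • ι p.2) := by
          refine Finset.sum_congr rfl fun q _ => Finset.sum_congr rfl fun p _ => ?_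
          rw [smul_mul_smul_comm, mul_comm]
      _ = (∑ q ∈ Sy, Coalgebra.counit (R := 𝕜) q.1 • ι q.2)
          * (∑ p ∈ Sx, Coalgebra.counit (R := 𝕜) p.1 • ι p.2) := by
          rw [Finset.sum_mul_sum]
      _ = ι y * ι x := by rw [(collapse y Sy hSy).1, (collapse x Sx hSx).1]
  have hRHS : ∑ q ∈ Sy, ∑ p ∈ Sx,
      (Coalgebra.counit (R := 𝕜) p.2 * Coalgebra.counit (R := 𝕜) q.2) • (ι p.1 * ι q.1)
      = ι x * ι y := by
    calc ∑ q ∈ Sy, ∑ p ∈ Sx,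
        (Coalgebra.counit (R := 𝕜) p.2 * Coalgebra.counit (R := 𝕜) q.2) • (ι p.1 * ι q.1)
        = ∑ p ∈ Sx, ∑ q ∈ Sy,
          (Coalgebra.counit (R := 𝕜) p.2 • ι p.1) * (Coalgebra.counit (R := 𝕜) q.2 • ι q.1) := by
          rw [Finset.sum_comm]
          refine Finset.sum_congr rfl fun p _ => Finset.sum_congr rfl fun q _ => ?_
          rw [smul_mul_smul_comm]
      _ = (∑ p ∈ Sx, Coalgebra.counit (R := 𝕜) p.2 • ι p.1)
          * (∑ q ∈ Sy, Coalgebra.counit (R := 𝕜) q.2 • ι q.1) := by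
          rw [Finset.sum_mul_sum]
      _ = ι x * ι y := by rw [(collapse x Sx hSx).2, (collapse y Sy hSy).2]
  have : ι (y * x) = ι (x * y) := by
    rw [map_mul, map_mul, ← hLHS, ← hRHS]; exact H24'
  exact (hι this).symm

/-- L3 : r(ι(u)·g, z) = ε(u) r(g,z) -/
lemma aux_L3 (ι : K →ₐc[𝕜] H) (r : H →ₗ[𝕜] K →ₗ[𝕜] 𝕜)
    (h21 : ∀ (h h' : H) (x : K), r (h * h') x
      = LinearMap.mul' 𝕜 𝕜 (TensorProduct.map (r h') (r h) (Coalgebra.comul (R := 𝕜) x)))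
    (h25 : ∀ x y : K, r (ι x) y = Coalgebra.counit (R := 𝕜) x * Coalgebra.counit (R := 𝕜) y)
    (u : K) (g : H) (z : K) :
    r (ι u * g) z = Coalgebra.counit (R := 𝕜) u * r g z := by
  obtain ⟨S, hS⟩ := TensorProduct.exists_finset (Coalgebra.comul (R := 𝕜) z)
  rw [h21 (ι u) g z, hS, map_sum, map_sum]
  simp only [map_tmul, LinearMap.mul'_apply, h25]
  calc ∑ p ∈ S, r g p.1 * (Coalgebra.counit (R := 𝕜) u * Coalgebra.counit (R := 𝕜) p.2)
      = Coalgebra.counit (R := 𝕜) u * ∑ p ∈ S, r g (Coalgebra.counit (R := 𝕜) p.2 • p.1) := by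
        rw [Finset.mul_sum]
        exact Finset.sum_congr rfl fun p _ => by
          rw [map_smul]; ring_nf
    _ = Coalgebra.counit (R := 𝕜) u * r g z := by
        rw [← map_sum, aux_counit_right (𝕜 := 𝕜) z S hS]

/-- the right action as a linear map in `lV v` -/
noncomputable def auxPhi (r : H →ₗ[𝕜] K →ₗ[𝕜] 𝕜) (a : K →ₗ[𝕜] V →ₗ[𝕜] V) (x : K) :
    H ⊗[𝕜] V →ₗ[𝕜] V :=
  (TensorProduct.lid 𝕜 V).toLinearMap
    ∘ₗ TensorProduct.map ((TensorProduct.lift r) ∘ₗ (TensorProduct.comm 𝕜 K H).toLinearMap)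
        (TensorProduct.lift a)
    ∘ₗ (TensorProduct.tensorTensorTensorComm 𝕜 K K H V).toLinearMap
    ∘ₗ TensorProduct.mk 𝕜 (K ⊗[𝕜] K) (H ⊗[𝕜] V) (Coalgebra.comul (R := 𝕜) x)

/-- `lV ∘ (a x)` as a linear map in `lV v` -/
noncomputable def auxPsi (ι : K →ₐc[𝕜] H) (a : K →ₗ[𝕜] V →ₗ[𝕜] V) (x : K) :
    H ⊗[𝕜] V →ₗ[𝕜] H ⊗[𝕜] V :=
  TensorProduct.map ((LinearMap.mul' 𝕜 H) ∘ₗ (TensorProduct.map ι.toLinearMap LinearMap.id))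
      (TensorProduct.lift a)
    ∘ₗ (TensorProduct.tensorTensorTensorComm 𝕜 K K H V).toLinearMap
    ∘ₗ TensorProduct.mk 𝕜 (K ⊗[𝕜] K) (H ⊗[𝕜] V) (Coalgebra.comul (R := 𝕜) x)

lemma auxPhi_repr {ιT : Type*} (r : H →ₗ[𝕜] K →ₗ[𝕜] 𝕜) (a : K →ₗ[𝕜] V →ₗ[𝕜] V) (x : K)
    (S : Finset ιT) (f g : ιT → K)
    (hS : Coalgebra.comul (R := 𝕜) x = ∑ i ∈ S, f i ⊗ₜ[𝕜] g i)
    (h : H) (u : V) :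
    auxPhi r a x (h ⊗ₜ[𝕜] u) = ∑ i ∈ S, r h (f i) • a (g i) u := by
  simp only [auxPhi, LinearMap.comp_apply, mk_apply, hS, sum_tmul, map_sum,
    LinearEquiv.coe_coe, tensorTensorTensorComm_tmul, map_tmul, comm_tmul, lift.tmul,
    lid_tmul, LinearMap.sum_apply]

lemma auxPsi_repr {ιT : Type*} (ι : K →ₐc[𝕜] H) (a : K →ₗ[𝕜] V →ₗ[𝕜] V) (x : K)
    (S : Finset ιT) (f g : ιT → K)
    (hS : Coalgebra.comul (R := 𝕜) x = ∑ i ∈ S, f i ⊗ₜ[𝕜] g i)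
    (h : H) (u : V) :
    auxPsi ι a x (h ⊗ₜ[𝕜] u) = ∑ i ∈ S, (ι (f i) * h) ⊗ₜ[𝕜] a (g i) u := by
  simp only [auxPsi, LinearMap.comp_apply, mk_apply, hS, sum_tmul, map_sum,
    LinearEquiv.coe_coe, tensorTensorTensorComm_tmul, map_tmul, lift.tmul,
    LinearMap.sum_apply, LinearMap.mul'_apply, LinearMap.id_apply]
  rfl

set_option maxHeartbeats 1000000 in
set_option synthInstance.maxHeartbeats 400000 in
/-- L6: evaluating `Φ_y ∘ (hmor expression)` -/
lemma aux_L6 (ι : K →ₐc[𝕜] H) (r : H →ₗ[𝕜] K →ₗ[𝕜] 𝕜) (a : K →ₗ[𝕜] V →ₗ[𝕜] V)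
    (h21 : ∀ (h h' : H) (x : K), r (h * h') x
      = LinearMap.mul' 𝕜 𝕜 (TensorProduct.map (r h') (r h) (Coalgebra.comul (R := 𝕜) x)))
    (h25 : ∀ x y : K, r (ι x) y = Coalgebra.counit (R := 𝕜) x * Coalgebra.counit (R := 𝕜) y)
    (hamul : ∀ (x y : K) (v : V), a (x * y) v = a x (a y v))
    (y : K) (Sy : Finset (K × K))
    (hSy : Coalgebra.comul (R := 𝕜) y = ∑ k ∈ Sy, k.1 ⊗ₜ[𝕜] k.2)
    (T : K ⊗[𝕜] K) (s : H ⊗[𝕜] V) :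
    auxPhi r a y (TensorProduct.map
        ((LinearMap.mul' 𝕜 H) ∘ₗ (TensorProduct.map ι.toLinearMap LinearMap.id))
        (TensorProduct.lift a)
        ((TensorProduct.tensorTensorTensorComm 𝕜 K K H V) (T ⊗ₜ[𝕜] s)))
    = ∑ k ∈ Sy, (TensorProduct.lid 𝕜 V) (TensorProduct.map (r.flip k.1)
        (a (k.2 * (TensorProduct.lid 𝕜 K)
          ((TensorProduct.map (Coalgebra.counit (R := 𝕜)) LinearMap.id) T))) s) := by
  induction T using TensorProduct.induction_on with
  | zero => simp
  | add T1 T2 ih1 ih2 =>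
      simp only [add_tmul, map_add, LinearMap.add_apply, mul_add, ih1, ih2,
        ← Finset.sum_add_distrib]
      refine Finset.sum_congr rfl fun k _ => ?_
      rw [TensorProduct.map_add_right, LinearMap.add_apply, map_add]
  | tmul u' u'' =>
      induction s using TensorProduct.induction_on with
      | zero => simp
      | add s1 s2 ih1 ih2 =>
          simp only [tmul_add, map_add, LinearMap.add_apply, ih1, ih2, ← Finset.sum_add_distrib]
      | tmul g u =>
          simp only [LinearEquiv.coe_coe, tensorTensorTensorComm_tmul, map_tmul,
            LinearMap.comp_apply, LinearMap.mul'_apply, LinearMap.id_apply, lift.tmul]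
          rw [auxPhi_repr (ιT := K × K) r a y Sy Prod.fst Prod.snd (by simpa using hSy)]
          simp only [lid_tmul, LinearMap.flip_apply]
          refine Finset.sum_congr rfl fun k _ => ?_
          have : ι.toLinearMap u' = ι u' := rfl
          rw [this, aux_L3 ι r h21 h25 u' g k.1, ← hamul]
          rw [mul_smul_comm, map_smul, LinearMap.smul_apply, smul_smul, mul_comm]

set_option maxHeartbeats 1000000 in
set_option synthInstance.maxHeartbeats 400000 in
/-- (†): computing `lV (ract v x)` as a linear map applied to the double coaction -/
lemma aux_dagger (ι : K →ₐc[𝕜] H) (r : H →ₗ[𝕜] K →ₗ[𝕜] 𝕜) (a : K →ₗ[𝕜] V →ₗ[𝕜] V)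
    (lV : V →ₗ[𝕜] H ⊗[𝕜] V)
    (hmor' : ∀ (x : K) (v : V), lV (a x v) = auxPsi ι a x (lV v))
    (x : K) (Sx : Finset (K × K))
    (hSx : Coalgebra.comul (R := 𝕜) x = ∑ p ∈ Sx, p.1 ⊗ₜ[𝕜] p.2)
    (t : H ⊗[𝕜] V) :
    lV (auxPhi r a x t) = ∑ p ∈ Sx, (TensorProduct.lid 𝕜 (H ⊗[𝕜] V))
      ((TensorProduct.map (r.flip p.1) (auxPsi ι a p.2))
        ((TensorProduct.map LinearMap.id lV) t)) := by
  induction t using TensorProduct.induction_on with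
  | zero => simp
  | add t1 t2 ih1 ih2 =>
      simp only [map_add, ih1, ih2, ← Finset.sum_add_distrib]
  | tmul h u =>
      rw [auxPhi_repr (ιT := K × K) r a x Sx Prod.fst Prod.snd (by simpa using hSx), map_sum]
      refine Finset.sum_congr rfl fun p _ => ?_
      rw [map_smul, hmor']
      simp [LinearMap.flip_apply]


set_option maxHeartbeats 1000000 in
set_option synthInstance.maxHeartbeats 400000 in
/-- the coassociativity/2.2 exchange -/
lemma aux_theta (r : H →ₗ[𝕜] K →ₗ[𝕜] 𝕜) (lV : V →ₗ[𝕜] H ⊗[𝕜] V)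
    (h22 : ∀ (h : H) (x y : K), r h (x * y)
      = LinearMap.mul' 𝕜 𝕜 (TensorProduct.map (r.flip x) (r.flip y) (Coalgebra.comul (R := 𝕜) h)))
    (hcoassoc : ∀ v : V,
      (TensorProduct.assoc 𝕜 H H V)
          ((TensorProduct.map (Coalgebra.comul (R := 𝕜)) LinearMap.id) (lV v))
        = (TensorProduct.map LinearMap.id lV) (lV v))
    (c1 c2 : K) (φ : V →ₗ[𝕜] V) (v : V) :
    (TensorProduct.lid 𝕜 V) (TensorProduct.map (r.flip (c1 * c2)) φ (lV v))
    = (TensorProduct.lid 𝕜 V) (TensorProduct.map (r.flip c1)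
        ((TensorProduct.lid 𝕜 V).toLinearMap ∘ₗ TensorProduct.map (r.flip c2) φ)
        ((TensorProduct.map LinearMap.id lV) (lV v))) := by
  rw [← hcoassoc v]
  generalize lV v = t
  induction t using TensorProduct.induction_on with
  | zero => simp
  | add t1 t2 ih1 ih2 => simp only [map_add, ih1, ih2]
  | tmul h u =>
      have key : ∀ T : H ⊗[𝕜] H,
          (TensorProduct.lid 𝕜 V) (TensorProduct.map (r.flip c1)
            ((TensorProduct.lid 𝕜 V).toLinearMap ∘ₗ TensorProduct.map (r.flip c2) φ)
            ((TensorProduct.assoc 𝕜 H H V) (T ⊗ₜ[𝕜] u)))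
          = (LinearMap.mul' 𝕜 𝕜 (TensorProduct.map (r.flip c1) (r.flip c2) T)) • φ u := by
        intro T
        induction T using TensorProduct.induction_on with
        | zero => simp
        | add T1 T2 j1 j2 =>
            simp only [add_tmul, map_add, j1, j2, add_smul]
        | tmul c d =>
            simp [LinearMap.flip_apply, smul_smul, mul_comm]
      rw [show (TensorProduct.map (Coalgebra.comul (R := 𝕜)) LinearMap.id) (h ⊗ₜ[𝕜] u)
          = (Coalgebra.comul (R := 𝕜) h) ⊗ₜ[𝕜] u by simp, key, ← h22]
      simp [LinearMap.flip_apply]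

end AuxRightAction

/-- v ↼ x := r(v₋₁, x₁)(x₂ ⊣ v₀) is a right K-module structure on V. -/
theorem right_action_is_module
    {𝕜 H K : Type*} [Field 𝕜] [Ring H] [HopfAlgebra 𝕜 H]
    [Ring K] [HopfAlgebra 𝕜 K]
    (ι : K →ₐc[𝕜] H) (hι : Function.Injective ι)
    (r : H →ₗ[𝕜] K →ₗ[𝕜] 𝕜)
    -- (2.1): r(hh', k) = r(h', k₁) r(h, k₂)
    (h21 : ∀ (h h' : H) (x : K), r (h * h') x
      = LinearMap.mul' 𝕜 𝕜 (TensorProduct.map (r h') (r h) (Coalgebra.comul (R := 𝕜) x)))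
    -- (2.2): r(h, kk') = r(h₁, k) r(h₂, k')
    (h22 : ∀ (h : H) (x y : K), r h (x * y)
      = LinearMap.mul' 𝕜 𝕜 (TensorProduct.map (r.flip x) (r.flip y) (Coalgebra.comul (R := 𝕜) h)))
    -- (2.3): r(h,1) = ε(h), r(1,k) = ε(k)
    (h23a : ∀ h : H, r h 1 = Coalgebra.counit (R := 𝕜) h)
    (h23b : ∀ x : K, r 1 x = Coalgebra.counit (R := 𝕜) x)
    -- (2.4): r(h₁, k₁) k₂ h₂ = h₁ k₁ r(h₂, k₂)
    (h24 : ∀ (h : H) (x : K),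
      (TensorProduct.lid 𝕜 H) (TensorProduct.map (TensorProduct.lift r)
          ((LinearMap.mul' 𝕜 H) ∘ₗ (TensorProduct.map ι.toLinearMap LinearMap.id)
            ∘ₗ (TensorProduct.comm 𝕜 H K).toLinearMap)
          ((TensorProduct.tensorTensorTensorComm 𝕜 H H K K)
            (Coalgebra.comul (R := 𝕜) h ⊗ₜ[𝕜] Coalgebra.comul (R := 𝕜) x)))
        = (TensorProduct.rid 𝕜 H) (TensorProduct.map
            ((LinearMap.mul' 𝕜 H) ∘ₗ (TensorProduct.map LinearMap.id ι.toLinearMap))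
            (TensorProduct.lift r)
            ((TensorProduct.tensorTensorTensorComm 𝕜 H H K K)
              (Coalgebra.comul (R := 𝕜) h ⊗ₜ[𝕜] Coalgebra.comul (R := 𝕜) x))))
    -- (2.5): r(k, k') = ε(k)ε(k')
    (h25 : ∀ x y : K, r (ι x) y = Coalgebra.counit (R := 𝕜) x * Coalgebra.counit (R := 𝕜) y)
    -- V is a left K-module in the category of left H-comodules
    {V : Type*} [AddCommGroup V] [Module 𝕜 V]
    (a : K →ₗ[𝕜] V →ₗ[𝕜] V)
    (ha1 : ∀ v : V, a 1 v = v)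
    (hamul : ∀ (x y : K) (v : V), a (x * y) v = a x (a y v))
    (lV : V →ₗ[𝕜] H ⊗[𝕜] V)
    (hcoassoc : ∀ v : V,
      (TensorProduct.assoc 𝕜 H H V)
          ((TensorProduct.map (Coalgebra.comul (R := 𝕜)) LinearMap.id) (lV v))
        = (TensorProduct.map LinearMap.id lV) (lV v))
    (hcounit : ∀ v : V,
      (TensorProduct.lid 𝕜 V)
          ((TensorProduct.map (Coalgebra.counit (R := 𝕜)) LinearMap.id) (lV v)) = v)
    -- the action is a morphism of H-comodules: λ(x ⊣ v) = ι(x₁)v₋₁ ⊗ (x₂ ⊣ v₀)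
    (hmor : ∀ (x : K) (v : V),
      lV (a x v) = (TensorProduct.map
          ((LinearMap.mul' 𝕜 H) ∘ₗ (TensorProduct.map ι.toLinearMap LinearMap.id))
          (TensorProduct.lift a))
        ((TensorProduct.tensorTensorTensorComm 𝕜 K K H V)
          ((Coalgebra.comul (R := 𝕜) x) ⊗ₜ[𝕜] (lV v))))
    -- the map ↼ : v ↼ x = r(v₋₁, x₁)(x₂ ⊣ v₀)
    (ract : V → K → V)
    (hract : ∀ (v : V) (x : K),
      ract v x = (TensorProduct.lid 𝕜 V)
        ((TensorProduct.map
            ((TensorProduct.lift r) ∘ₗ (TensorProduct.comm 𝕜 K H).toLinearMap)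
            (TensorProduct.lift a))
          ((TensorProduct.tensorTensorTensorComm 𝕜 K K H V)
            ((Coalgebra.comul (R := 𝕜) x) ⊗ₜ[𝕜] (lV v))))) :
    -- ↼ is a right K-module structure
    (∀ v : V, ract v 1 = v)
    ∧ (∀ (v : V) (x y : K), ract (ract v x) y = ract v (x * y)) := by
  classical
  have hract' : ∀ (v : V) (x : K), ract v x = auxPhi r a x (lV v) := fun v x => by
    rw [hract]; rfl
  have hmor' : ∀ (x : K) (v : V), lV (a x v) = auxPsi ι a x (lV v) := fun x v => by
    rw [hmor]; rfl
  constructor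
  · intro v
    rw [hract']
    have key : ∀ t : H ⊗[𝕜] V, auxPhi r a (1 : K) t
        = (TensorProduct.lid 𝕜 V)
            ((TensorProduct.map (Coalgebra.counit (R := 𝕜)) LinearMap.id) t) := by
      intro t
      induction t using TensorProduct.induction_on with
      | zero => simp
      | add t1 t2 ih1 ih2 => simp only [map_add, ih1, ih2]
      | tmul h u =>
          rw [auxPhi_repr (ιT := Unit) r a 1 {Unit.unit} (fun _ => 1) (fun _ => 1)
            (by simp [Algebra.TensorProduct.one_def])]
          simp [h23a, ha1]
    rw [key, hcounit]
  · intro v x y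
    obtain ⟨Sx, hSx⟩ := TensorProduct.exists_finset (Coalgebra.comul (R := 𝕜) x)
    obtain ⟨Sy, hSy⟩ := TensorProduct.exists_finset (Coalgebra.comul (R := 𝕜) y)
    obtain ⟨SE, hSE⟩ := TensorProduct.exists_finset
      ((TensorProduct.map LinearMap.id lV) (lV v))
    have hcomm : ∀ p q : K, p * q = q * p := aux_comm ι hι r h24 h25
    -- collapse of the counit on the second factor
    have hchi : (TensorProduct.map (LinearMap.id)
        ((TensorProduct.lid 𝕜 V).toLinearMap
          ∘ₗ TensorProduct.map (Coalgebra.counit (R := 𝕜)) LinearMap.id))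
        ((TensorProduct.map LinearMap.id lV) (lV v)) = lV v := by
      rw [← LinearMap.comp_apply, ← TensorProduct.map_comp]
      have h1 : ((TensorProduct.lid 𝕜 V).toLinearMap
          ∘ₗ TensorProduct.map (Coalgebra.counit (R := 𝕜)) LinearMap.id) ∘ₗ lV
          = LinearMap.id := LinearMap.ext fun w => by simpa using hcounit w
      rw [h1, LinearMap.id_comp, TensorProduct.map_id, LinearMap.id_apply]
    have hlV : lV v = ∑ q ∈ SE, q.1 ⊗ₜ[𝕜] ((TensorProduct.lid 𝕜 V)
        ((TensorProduct.map (Coalgebra.counit (R := 𝕜)) LinearMap.id) q.2)) := by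
      conv_lhs => rw [← hchi, hSE]
      rw [map_sum]
      simp
    -- representation of comul (x * y)
    have hSxy : Coalgebra.comul (R := 𝕜) (x * y)
        = ∑ c ∈ Sx ×ˢ Sy, (c.1.1 * c.2.1) ⊗ₜ[𝕜] (c.1.2 * c.2.2) := by
      rw [Bialgebra.comul_mul, hSx, hSy, Finset.sum_mul_sum, ← Finset.sum_product']
      exact Finset.sum_congr rfl fun c _ => Algebra.TensorProduct.tmul_mul_tmul _ _ _ _
    -- the left-hand side
    have hL : ract (ract v x) y
        = ∑ p ∈ Sx, ∑ q ∈ SE, ∑ k ∈ Sy, r q.1 p.1 •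
            (TensorProduct.lid 𝕜 V)
              (TensorProduct.map (r.flip k.1) (a (p.2 * k.2)) q.2) := by
      rw [hract', hract', aux_dagger ι r a lV hmor' x Sx hSx (lV v), map_sum]
      refine Finset.sum_congr rfl fun p _ => ?_
      rw [hSE]
      rw [map_sum, map_sum, map_sum]
      refine Finset.sum_congr rfl fun q _ => ?_
      rw [map_tmul, lid_tmul, map_smul]
      have hpsi : auxPsi ι a p.2 q.2 = TensorProduct.map
          ((LinearMap.mul' 𝕜 H) ∘ₗ (TensorProduct.map ι.toLinearMap LinearMap.id))
          (TensorProduct.lift a)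
          ((TensorProduct.tensorTensorTensorComm 𝕜 K K H V)
            ((Coalgebra.comul (R := 𝕜) p.2) ⊗ₜ[𝕜] q.2)) := rfl
      rw [hpsi, aux_L6 ι r a h21 h25 hamul y Sy hSy (Coalgebra.comul (R := 𝕜) p.2) q.2]
      have hcol : (TensorProduct.lid 𝕜 K)
          ((TensorProduct.map (Coalgebra.counit (R := 𝕜)) LinearMap.id)
            (Coalgebra.comul (R := 𝕜) p.2)) = p.2 := by
        have : (TensorProduct.map (Coalgebra.counit (R := 𝕜)) (LinearMap.id : K →ₗ[𝕜] K))
            (Coalgebra.comul (R := 𝕜) p.2) = (1 : 𝕜) ⊗ₜ[𝕜] p.2 :=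
          Coalgebra.rTensor_counit_comul (R := 𝕜) p.2
        rw [this]; simp
      rw [hcol, LinearMap.flip_apply, Finset.smul_sum]
      exact Finset.sum_congr rfl fun k _ => by rw [hcomm k.2 p.2]
    -- the right-hand side
    have hR : ract v (x * y)
        = ∑ p ∈ Sx, ∑ q ∈ SE, ∑ k ∈ Sy, r q.1 p.1 •
            (TensorProduct.lid 𝕜 V)
              (TensorProduct.map (r.flip k.1) (a (p.2 * k.2)) q.2) := by
      rw [hract']
      conv_lhs => rw [hlV]
      rw [map_sum]
      have step1 : ∀ q : H × (H ⊗[𝕜] V), auxPhi r a (x * y) (q.1 ⊗ₜ[𝕜]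
          ((TensorProduct.lid 𝕜 V)
            ((TensorProduct.map (Coalgebra.counit (R := 𝕜)) LinearMap.id) q.2)))
          = ∑ c ∈ Sx ×ˢ Sy, r q.1 (c.1.1 * c.2.1) •
              a (c.1.2 * c.2.2) ((TensorProduct.lid 𝕜 V)
                ((TensorProduct.map (Coalgebra.counit (R := 𝕜)) LinearMap.id) q.2)) :=
        fun q => auxPhi_repr r a (x * y) (Sx ×ˢ Sy) _ _ hSxy q.1 _
      rw [Finset.sum_congr rfl fun q _ => step1 q, Finset.sum_comm]
      have step2 : ∀ c ∈ Sx ×ˢ Sy, (∑ q ∈ SE, r q.1 (c.1.1 * c.2.1) •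
            a (c.1.2 * c.2.2) ((TensorProduct.lid 𝕜 V)
              ((TensorProduct.map (Coalgebra.counit (R := 𝕜)) LinearMap.id) q.2)))
          = ∑ q ∈ SE, r q.1 c.1.1 • (TensorProduct.lid 𝕜 V)
              (TensorProduct.map (r.flip c.2.1) (a (c.1.2 * c.2.2)) q.2) := by
        intro c _
        have := aux_theta r lV h22 hcoassoc c.1.1 c.2.1 (a (c.1.2 * c.2.2)) v
        rw [hSE, hlV] at this
        rw [map_sum, map_sum, map_sum] at this
        simp only [map_tmul, lid_tmul, LinearMap.flip_apply, LinearMap.comp_apply,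
          LinearEquiv.coe_coe] at this
        simpa using this
      rw [Finset.sum_congr rfl step2, Finset.sum_product]
      exact Finset.sum_congr rfl fun p _ => Finset.sum_comm
    rw [hL, hR]
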